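/- Let I ⊆ R be a nonzero, proper S_n-invariant monomial ideal. Then there exist unique elements μ^1,…,μ^t ∈ P_n^∞ (t ≥ 1, unique as a set) such that I = Q_{μ^1} ∩ ⋯ ∩ Q_{μ^t} and this presentation is irredundant, i.e. none of the ideals Q_{μ^k} can be omitted from the intersection. -/

import Mathlib

open scoped BigOperators

noncomputable section
open Classical

/-! ## Generic (labeled) simplicial chain complexes and reduced homology over a field -/

section Homology

variable (K : Type) [Field K] {α : Type}

/-- Index type for chains: elements of `S` whose face (second component) has `j` elements. -/
def ChainIdx (S : Set (α × Finset ℕ)) (j : ℕ) : Type :=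
  {q : α × Finset ℕ // q ∈ S ∧ q.2.card = j}

/-- The boundary of a basis element, with the usual simplicial signs. -/
noncomputable def bdElt (S : Set (α × Finset ℕ)) (j : ℕ) (q : ChainIdx S (j + 1)) :
    ChainIdx S j →₀ K :=
  ∑ v ∈ q.1.2,
    if h : (q.1.1, q.1.2.erase v) ∈ S ∧ (q.1.2.erase v).card = j then
      ((-1 : K) ^ (q.1.2.filter (fun u => u ≤ v)).card) •
        Finsupp.single (⟨(q.1.1, q.1.2.erase v), h⟩ : ChainIdx S j) (1 : K)
    else 0

/-- The simplicial boundary map. -/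
noncomputable def bd (S : Set (α × Finset ℕ)) (j : ℕ) :
    (ChainIdx S (j + 1) →₀ K) →ₗ[K] (ChainIdx S j →₀ K) :=
  Finsupp.linearCombination K (bdElt K S j)

/-- Cycles in homological degree `j` (chains are indexed by the cardinality of faces;
degree `j` corresponds to reduced topological degree `j - 1`). -/
noncomputable def cycles (S : Set (α × Finset ℕ)) : (j : ℕ) → Submodule K (ChainIdx S j →₀ K)
  | 0 => ⊤
  | (i + 1) => LinearMap.ker (bd K S i)

/-- `rhd K S j` is the dimension of the reduced homology group `H̃_{j-1}` of the complex `S`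
(the chain groups being finite dimensional, this is `dim` cycles `- dim` boundaries). -/
noncomputable def rhd (S : Set (α × Finset ℕ)) (j : ℕ) : ℕ :=
  Module.finrank K (cycles K S j) -
    Module.finrank K (LinearMap.range (bd K S j) ⊓ cycles K S j : Submodule K _)

/-- `hdim K S j = dim_K H̃_j(S; K)`, for `j : ℤ` (zero for `j ≤ -2`). -/
noncomputable def hdim (S : Set (α × Finset ℕ)) (j : ℤ) : ℕ :=
  if 0 ≤ j + 1 then rhd K S (j + 1).toNat else 0

/-- View an unlabeled collection of faces as a labeled one (labels in `Unit`). -/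
def lab (Δ : Set (Finset ℕ)) : Set (Unit × Finset ℕ) := {q | q.2 ∈ Δ}

/-- Dimension of reduced homology `H̃_{j-1}(Δ; K)` of a collection `Δ` of finite sets. -/
noncomputable def rhd0 (Δ : Set (Finset ℕ)) (j : ℕ) : ℕ := rhd K (lab Δ) j

/-- Dimension of reduced homology `H̃_j(Δ; K)`, `j : ℤ`. -/
noncomputable def hdim0 (Δ : Set (Finset ℕ)) (j : ℤ) : ℕ := hdim K (lab Δ) j

end Homology

/-! ## Monomial ideals in `k[x_1, …, x_n]`, invariant under the symmetric group -/

section Poly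

variable (K : Type) [Field K] (n : ℕ)

/-- The monomial `x^a` in `k[x_1, …, x_n]`. -/
noncomputable def mon (a : Fin n → ℕ) : MvPolynomial (Fin n) K :=
  MvPolynomial.monomial (Finsupp.equivFunOnFinite.symm a) 1

/-- A monomial ideal: an ideal generated by a set of monomials. -/
def IsMonomialIdeal (I : Ideal (MvPolynomial (Fin n) K)) : Prop :=
  ∃ S : Set (Fin n → ℕ), I = Ideal.span (mon K n '' S)

/-- `I` is invariant under the action of `S_n` permuting the variables. -/
def IsSymmetricIdeal (I : Ideal (MvPolynomial (Fin n) K)) : Prop :=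
  ∀ σ : Equiv.Perm (Fin n), Ideal.map (MvPolynomial.rename σ).toRingHom I = I

end Poly

/-! ## Partitions given by blocks `(d_1^{p_1}, …, d_s^{p_s}, 0^{p_{s+1}})` -/

section Blocks

/-- `cumsum p k = p 0 + ⋯ + p (k-1)`. -/
def cumsum (p : ℕ → ℕ) (k : ℕ) : ℕ := ∑ j ∈ Finset.range k, p j

/-- The index of the block (among blocks `0, …, s`) containing position `i`,
for blocks of sizes `p 0, …, p (s-1)` followed by a final block. -/
def blkOf (p : ℕ → ℕ) (s i : ℕ) : ℕ :=
  ((Finset.range s).filter fun k => cumsum p (k + 1) ≤ i).card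

/-- The partition `μ = (d_0^{p_0}, …, d_{s-1}^{p_{s-1}}, 0^{p_s})` (0-indexed blocks),
as a function of the position `i ∈ {0, …, n-1}` where `n = cumsum p (s+1)`. -/
def muOf (s : ℕ) (d p : ℕ → ℕ) (i : ℕ) : ℕ :=
  if blkOf p s i < s then d (blkOf p s i) else 0

/-- The partition `μ ∖ c`, obtained from `μ` by replacing, for each `k`, the last `c k` of
the parts equal to `d k` by `d k - 1`. -/
def muMinus (s : ℕ) (d p c : ℕ → ℕ) (i : ℕ) : ℕ :=
  if blkOf p s i < s then
    (if p (blkOf p s i) - c (blkOf p s i) ≤ i - cumsum p (blkOf p s i) then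
      d (blkOf p s i) - 1 else d (blkOf p s i))
  else 0

/-- Indicator vector of a finite set `F`. -/
def eF (F : Finset ℕ) (j : ℕ) : ℕ := if j ∈ F then 1 else 0

end Blocks

/-! ## The simplicial complexes `Δ^{μ,c}(I)` and `Γ^{μ,c}(I)` -/

section Complexes

variable (K : Type) [Field K] (n : ℕ)

/-- The simplicial complex `Δ^{μ,c}(I) = {F ⊆ [s] : μ ∖ (c + e_F) ∈ P(I)}` (vertices are
`0, …, s-1`), for `μ = (d_0^{p_0}, …, d_{s-1}^{p_{s-1}}, 0^{p_s})` and `c ≤ p(μ)`. -/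
def DeltaCx (I : Ideal (MvPolynomial (Fin n) K)) (s : ℕ) (d p c : ℕ → ℕ) :
    Set (Finset ℕ) :=
  {F | F ⊆ Finset.range s ∧
    mon K n (fun i => muMinus s d p (fun j => c j + eF F j) i.val) ∈ I}

/-- The Alexander dual complex `Γ^{μ,c}(I) = {F ⊆ [s] : μ ∖ (c + e_{[s]∖F}) ∈ O(I)}`. -/
def GammaCx (I : Ideal (MvPolynomial (Fin n) K)) (s : ℕ) (d p c : ℕ → ℕ) :
    Set (Finset ℕ) :=
  {F | F ⊆ Finset.range s ∧
    mon K n (fun i => muMinus s d p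
      (fun j => c j + (if j < s ∧ j ∉ F then 1 else 0)) i.val) ∉ I}

/-- `γ_i^{μ,c}(I) = dim_K H̃_{i-1}(Δ^{μ,c}(I); K)`. -/
noncomputable def gammaDim (I : Ideal (MvPolynomial (Fin n) K)) (s : ℕ) (d p c : ℕ → ℕ)
    (i : ℕ) : ℕ :=
  rhd0 K (DeltaCx K n I s d p c) i

end Complexes

/-! ## Multigraded Tor via the Koszul complex

For a monomial ideal `I`, the multidegree-`a` strand of the Koszul complex `K_•(I)` is the
(shifted) reduced chain complex of the simplicial complex
`Δ_a^I = {F ⊆ [n] : a - e_F ≥ 0, x^{a - e_F} ∈ I}`, so that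
`dim_K Tor_i(I, K)_a = dim_K H̃_{i-1}(Δ_a^I; K)`, and similarly for `R/I` with the
condition `x^{a-e_F} ∉ I`. -/

section Tor

variable (K : Type) [Field K] (n : ℕ)

/-- The Koszul simplicial complex of the ideal `I` in multidegree `a`. -/
def KosI (I : Ideal (MvPolynomial (Fin n) K)) (a : Fin n → ℕ) : Set (Finset ℕ) :=
  {F | F ⊆ Finset.range n ∧ (∀ i : Fin n, (i : ℕ) ∈ F → 1 ≤ a i) ∧
    mon K n (fun i => a i - eF F i.val) ∈ I}

/-- The Koszul complex of `R/I` in multidegree `a`. -/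
def KosQ (I : Ideal (MvPolynomial (Fin n) K)) (a : Fin n → ℕ) : Set (Finset ℕ) :=
  {F | F ⊆ Finset.range n ∧ (∀ i : Fin n, (i : ℕ) ∈ F → 1 ≤ a i) ∧
    mon K n (fun i => a i - eF F i.val) ∉ I}

/-- `dim_K Tor_i(I, K)_a`, for a monomial ideal `I` and a multidegree `a ∈ ℤ^n`
(components with a negative coordinate vanish, so only `a ∈ ℕ^n` is needed). -/
noncomputable def torDim (I : Ideal (MvPolynomial (Fin n) K)) (i : ℕ) (a : Fin n → ℕ) : ℕ :=
  rhd0 K (KosI K n I a) i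

/-- `dim_K Tor_i(R/I, K)_a` for a monomial ideal `I`. -/
noncomputable def torQDim (I : Ideal (MvPolynomial (Fin n) K)) (i : ℕ) (a : Fin n → ℕ) : ℕ :=
  rhd0 K (KosQ K n I a) i

/-- `dim_K Tor_i(I, K)_{⟨μ⟩}`: the sum of `dim_K Tor_i(I, K)_a` over all rearrangements `a`
of the partition `μ`. -/
noncomputable def torDimSym (I : Ideal (MvPolynomial (Fin n) K)) (i : ℕ) (μ : Fin n → ℕ) : ℕ :=
  ∑ a ∈ Finset.image (fun σ : Equiv.Perm (Fin n) => μ ∘ σ) Finset.univ, torDim K n I i a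

/-- `dim_K Tor_i(R/I, K)_{⟨μ⟩}`. -/
noncomputable def torQDimSym (I : Ideal (MvPolynomial (Fin n) K)) (i : ℕ) (μ : Fin n → ℕ) : ℕ :=
  ∑ a ∈ Finset.image (fun σ : Equiv.Perm (Fin n) => μ ∘ σ) Finset.univ, torQDim K n I i a

end Tor

/-! ## Extended partitions in `P_n^∞` and the dual generators of an `S_n`-invariant
monomial ideal -/

section ExtendedPartitions

variable (K : Type) [Field K] (n : ℕ)

/-- `ℓ(μ)`: the number of entries of `μ ∈ P_n^∞` equal to `∞`. -/
def ellInf (μ : Fin n → ℕ∞) : ℕ := (Finset.univ.filter fun i => μ i = ⊤).card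

/-- The largest finite entry of `μ ∈ P_n^∞` (i.e. the first finite entry, `μ` being
weakly decreasing). -/
def topVal (μ : Fin n → ℕ∞) : ℕ := Finset.univ.sup fun i => (μ i).toNat

/-- `μ^+ ∈ P_n`: each `∞` entry of `μ` is replaced by (largest finite entry)` + 1`. -/
def plusOf (μ : Fin n → ℕ∞) (i : Fin n) : ℕ :=
  if μ i = ⊤ then topVal n μ + 1 else (μ i).toNat

/-- `μ̃ = μ^+ + (0^{ℓ(μ)}, 1^{n - ℓ(μ)}) ∈ P_n`. -/
def tildeOf (μ : Fin n → ℕ∞) (i : Fin n) : ℕ :=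
  if μ i = ⊤ then topVal n μ + 1 else (μ i).toNat + 1

/-- The ideal `Q_μ = ∩_{σ ∈ S_n} σ((x_k^{μ_k + 1}, …, x_n^{μ_n + 1}))`, where
`μ_k, …, μ_n` are the finite entries of `μ ∈ P_n^∞`. -/
noncomputable def Qgen (μ : Fin n → ℕ∞) : Ideal (MvPolynomial (Fin n) K) :=
  ⨅ σ : Equiv.Perm (Fin n),
    Ideal.map (MvPolynomial.rename σ).toRingHom
      (Ideal.span {g | ∃ i : Fin n, μ i ≠ ⊤ ∧ g = MvPolynomial.X i ^ ((μ i).toNat + 1)})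

/-- `Λ` is the (finite) set of dual generators of `I`, i.e. `I = ∩_{μ ∈ Λ} Q_μ` is the
irredundant presentation of `I` by ideals `Q_μ`. -/
def IsDualPresentation (I : Ideal (MvPolynomial (Fin n) K))
    (Λ : Finset (Fin n → ℕ∞)) : Prop :=
  (∀ μ ∈ Λ, Antitone μ) ∧ (I = ⨅ μ ∈ Λ, Qgen K n μ) ∧
    ∀ μ ∈ Λ, I ≠ ⨅ ρ ∈ Λ, ⨅ _ : ρ ≠ μ, Qgen K n ρ

/-- The partial order `≼` on dual generators: `μ ≼ ρ` iff `μ̃ ≤ ρ̃` (componentwise) and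
`ℓ(μ) - ℓ(ρ) ≤ |ρ̃| - |μ̃|`. -/
def preceq (μ ρ : Fin n → ℕ∞) : Prop :=
  (∀ i, tildeOf n μ i ≤ tildeOf n ρ i) ∧
    (∑ i, tildeOf n μ i) + ellInf n μ ≤ (∑ i, tildeOf n ρ i) + ellInf n ρ

/-- The extended partition `ρ = (∞^{p_0}, d_1^{p_1}, …, d_s^{p_s}) ∈ P_n^∞`
(so `n = p 0 + p 1 + ⋯ + p s`), as a function of the position `i ∈ {0, …, n-1}`. -/
def rhoOf (s : ℕ) (d p : ℕ → ℕ) (i : ℕ) : ℕ∞ :=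
  if blkOf p (s + 1) i = 0 then ⊤ else ((d (blkOf p (s + 1) i) : ℕ) : ℕ∞)

end ExtendedPartitions

section St5
variable (K : Type) [Field K] (n : ℕ)

def Below (a : Fin n → ℕ) (ν : Fin n → ℕ∞) : Prop := ∀ i, (a i : ℕ∞) ≤ ν i

lemma enat_lt_coe_iff (x : ℕ∞) (m : ℕ) : x < (m : ℕ∞) ↔ x ≠ ⊤ ∧ x.toNat + 1 ≤ m := by
  induction x using ENat.recTopCoe with
  | top => simp [not_top_lt]
  | coe k => simpa [Nat.cast_lt] using Nat.lt_iff_add_one_le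

lemma mon_mem_monomial_span (S : Set (Fin n →₀ ℕ)) (a : Fin n → ℕ) :
    mon K n a ∈ Ideal.span ((fun s => MvPolynomial.monomial s (1 : K)) '' S) ↔
      ∃ s ∈ S, s ≤ Finsupp.equivFunOnFinite.symm a := by
  rw [mon, MvPolynomial.mem_ideal_span_monomial_image]
  simp [MvPolynomial.support_monomial]

lemma qgen_eq (ν : Fin n → ℕ∞) :
    Qgen K n ν = ⨅ σ : Equiv.Perm (Fin n),
      Ideal.span ((fun s => MvPolynomial.monomial s (1 : K)) ''
        {d | ∃ i : Fin n, ν i ≠ ⊤ ∧ d = Finsupp.single (σ i) ((ν i).toNat + 1)}) := by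
  unfold Qgen
  congr 1
  funext σ
  rw [Ideal.map_span]
  congr 1
  ext g
  constructor
  · rintro ⟨h, ⟨i, hi, rfl⟩, rfl⟩
    exact ⟨Finsupp.single (σ i) ((ν i).toNat + 1), ⟨i, hi, rfl⟩, by
      simp [MvPolynomial.X_pow_eq_monomial, MvPolynomial.rename_monomial,
        Finsupp.mapDomain_add, Finsupp.mapDomain_single]⟩
  · rintro ⟨d, ⟨i, hi, rfl⟩, rfl⟩
    exact ⟨MvPolynomial.X i ^ ((ν i).toNat + 1), ⟨i, hi, rfl⟩, by
      simp [MvPolynomial.X_pow_eq_monomial, MvPolynomial.rename_monomial,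
        Finsupp.mapDomain_add, Finsupp.mapDomain_single]⟩

lemma mon_mem_qgen (ν : Fin n → ℕ∞) (a : Fin n → ℕ) :
    mon K n a ∈ Qgen K n ν ↔ ∀ σ : Equiv.Perm (Fin n), ∃ i, ν i < (a (σ i) : ℕ∞) := by
  rw [qgen_eq, Submodule.mem_iInf]
  refine forall_congr' fun σ => ?_
  rw [mon_mem_monomial_span]
  constructor
  · rintro ⟨s, ⟨i, hi, rfl⟩, hle⟩
    refine ⟨i, ?_⟩
    rw [enat_lt_coe_iff]
    exact ⟨hi, by simpa using (Finsupp.single_le_iff.mp hle)⟩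
  · rintro ⟨i, hi⟩
    rw [enat_lt_coe_iff] at hi
    exact ⟨Finsupp.single (σ i) ((ν i).toNat + 1), ⟨i, hi.1, rfl⟩,
      Finsupp.single_le_iff.mpr (by simpa using hi.2)⟩

lemma mon_not_mem_qgen (ν : Fin n → ℕ∞) (a : Fin n → ℕ) :
    mon K n a ∉ Qgen K n ν ↔ ∃ σ : Equiv.Perm (Fin n), Below n (a ∘ σ) ν := by
  rw [mon_mem_qgen]
  push_neg
  simp [Below, Function.comp]

lemma mem_qgen_iff_support (ν : Fin n → ℕ∞) (p : MvPolynomial (Fin n) K) :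
    p ∈ Qgen K n ν ↔ ∀ d ∈ p.support, mon K n ⇑d ∈ Qgen K n ν := by
  rw [qgen_eq]
  simp only [Submodule.mem_iInf]
  constructor
  · intro h d hd σ
    rw [mon_mem_monomial_span]
    obtain ⟨s, hs, hle⟩ := (MvPolynomial.mem_ideal_span_monomial_image.mp (h σ)) d hd
    exact ⟨s, hs, by rwa [Finsupp.equivFunOnFinite_symm_coe]⟩
  · intro h σ
    rw [MvPolynomial.mem_ideal_span_monomial_image]
    intro d hd
    have := (mon_mem_monomial_span K n _ ⇑d).mp (h d hd σ)
    rwa [Finsupp.equivFunOnFinite_symm_coe] at this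

variable (I : Ideal (MvPolynomial (Fin n) K))

lemma mem_I_iff_support (hmon : ∃ S : Set (Fin n → ℕ), I = Ideal.span (mon K n '' S))
    (p : MvPolynomial (Fin n) K) :
    p ∈ I ↔ ∀ d ∈ p.support, mon K n ⇑d ∈ I := by
  obtain ⟨S, rfl⟩ := hmon
  have himg : mon K n '' S =
      (fun s => MvPolynomial.monomial s (1 : K)) '' (Finsupp.equivFunOnFinite.symm '' S) := by
    rw [Set.image_image]; rfl
  rw [himg, MvPolynomial.mem_ideal_span_monomial_image]
  constructor
  · intro h d hd
    rw [mon_mem_monomial_span, Finsupp.equivFunOnFinite_symm_coe]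
    exact h d hd
  · intro h d hd
    have := (mon_mem_monomial_span K n _ ⇑d).mp (h d hd)
    rwa [Finsupp.equivFunOnFinite_symm_coe] at this

lemma mon_mul_mon (a b : Fin n → ℕ) :
    mon K n a * mon K n b = mon K n (a + b) := by
  have h : Finsupp.equivFunOnFinite.symm a + Finsupp.equivFunOnFinite.symm b
      = Finsupp.equivFunOnFinite.symm (a + b) := by ext i; simp
  unfold mon
  rw [MvPolynomial.monomial_mul, one_mul, h]

lemma I_up {a b : Fin n → ℕ} (hab : a ≤ b) (ha : mon K n a ∈ I) : mon K n b ∈ I := by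
  have : mon K n b = mon K n (fun i => b i - a i) * mon K n a := by
    rw [mon_mul_mon]
    congr 1
    funext i
    exact (Nat.sub_add_cancel (hab i)).symm
  rw [this]
  exact Ideal.mul_mem_left _ _ ha

lemma rename_mon (τ : Equiv.Perm (Fin n)) (a : Fin n → ℕ) :
    MvPolynomial.rename ⇑τ (mon K n a) = mon K n (a ∘ ⇑τ⁻¹) := by
  have hd : Finsupp.mapDomain ⇑τ (Finsupp.equivFunOnFinite.symm a)
      = Finsupp.equivFunOnFinite.symm (a ∘ ⇑τ⁻¹) := by
    ext j
    have h1 : τ (τ⁻¹ j) = j := τ.apply_symm_apply j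
    have := Finsupp.mapDomain_apply τ.injective (Finsupp.equivFunOnFinite.symm a) (τ⁻¹ j)
    rw [h1] at this
    rw [this]
    simp
  unfold mon
  rw [MvPolynomial.rename_monomial, hd]

lemma I_perm (hsym : ∀ σ : Equiv.Perm (Fin n),
      Ideal.map (MvPolynomial.rename σ).toRingHom I = I)
    (σ : Equiv.Perm (Fin n)) {a : Fin n → ℕ} (ha : mon K n a ∈ I) :
    mon K n (a ∘ ⇑σ) ∈ I := by
  have h := hsym σ⁻¹
  have : MvPolynomial.rename ⇑σ⁻¹ (mon K n a) ∈
      Ideal.map (MvPolynomial.rename (σ⁻¹ : Equiv.Perm (Fin n))).toRingHom I :=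
    Ideal.mem_map_of_mem _ ha
  rw [h, rename_mon] at this
  simpa using this

lemma exists_perm_antitone (a : Fin n → ℕ) :
    ∃ σ : Equiv.Perm (Fin n), Antitone (a ∘ ⇑σ) := by
  refine ⟨(Fin.revPerm).trans (Tuple.sort a), ?_⟩
  have h1 : Monotone (a ∘ ⇑(Tuple.sort a)) := Tuple.monotone_sort a
  have h2 : Antitone (fun i : Fin n => Fin.rev i) := fun i j hij => Fin.rev_le_rev.mpr hij
  exact h1.comp_antitone h2

lemma below_trans {a : Fin n → ℕ} {ν ρ : Fin n → ℕ∞} (h : Below n a ν) (h2 : ν ≤ ρ) :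
    Below n a ρ := fun i => (h i).trans (h2 i)

/-- rearrangement: if a sorted tuple fits below a sorted ν after permutation, it fits directly. -/
lemma below_of_perm (a : Fin n → ℕ) (ρ : Fin n → ℕ∞) (ha : Antitone a) (hρ : Antitone ρ)
    (σ : Equiv.Perm (Fin n)) (h : Below n (a ∘ ⇑σ) ρ) : Below n a ρ := by
  intro i
  have hpig : ∃ j, i ≤ j ∧ σ j ≤ i := by
    by_contra hno
    push_neg at hno
    have hsub : (Finset.Ici i).image σ ⊆ Finset.Ioi i := by
      intro x hx
      obtain ⟨j, hj, rfl⟩ := Finset.mem_image.mp hx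
      exact Finset.mem_Ioi.mpr (hno j (Finset.mem_Ici.mp hj))
    have hcard := Finset.card_le_card hsub
    rw [Finset.card_image_of_injective _ σ.injective, Fin.card_Ici, Fin.card_Ioi] at hcard
    have := i.isLt
    omega
  obtain ⟨j, hij, hji⟩ := hpig
  calc (a i : ℕ∞) ≤ (a (σ j) : ℕ∞) := Nat.cast_le.mpr (ha hji)
    _ ≤ ρ j := h j
    _ ≤ ρ i := hρ hij

def trunc (N : ℕ) (ν : Fin n → ℕ∞) (i : Fin n) : ℕ := (min (ν i) (N : ℕ∞)).toNat

lemma coe_trunc (N : ℕ) (ν : Fin n → ℕ∞) (i : Fin n) :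
    ((trunc n N ν i : ℕ) : ℕ∞) = min (ν i) (N : ℕ∞) := by
  refine ENat.coe_toNat ?_
  exact ne_top_of_le_ne_top (WithTop.coe_ne_top) (min_le_right _ _)

lemma trunc_below (N : ℕ) (ν : Fin n → ℕ∞) : Below n (trunc n N ν) ν := by
  intro i
  rw [coe_trunc]
  exact min_le_left _ _

lemma trunc_antitone (N : ℕ) {ν : Fin n → ℕ∞} (hν : Antitone ν) : Antitone (trunc n N ν) := by
  intro i j hij
  have : ((trunc n N ν j : ℕ) : ℕ∞) ≤ ((trunc n N ν i : ℕ) : ℕ∞) := by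
    rw [coe_trunc, coe_trunc]
    exact min_le_min (hν hij) le_rfl
  exact_mod_cast this

def Good (ν : Fin n → ℕ∞) : Prop :=
  Antitone ν ∧ ∀ a : Fin n → ℕ, Below n a ν → mon K n a ∉ I

def MaxGood (ν : Fin n → ℕ∞) : Prop :=
  Good K n I ν ∧ ∀ ρ, Good K n I ρ → ν ≤ ρ → ρ = ν

lemma le_biSup_enat {c : Set (Fin n → ℕ∞)} (hne : c.Nonempty) (i : Fin n) (m : ℕ)
    (h : (m : ℕ∞) ≤ ⨆ ν ∈ c, ν i) : ∃ ν ∈ c, (m : ℕ∞) ≤ ν i := by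
  by_contra h'
  push_neg at h'
  match m with
  | 0 => obtain ⟨ν, hν⟩ := hne; exact absurd (zero_le : (0:ℕ∞) ≤ ν i) (not_le.mpr (h' ν hν))
  | (k+1) =>
    have hb : ∀ ν ∈ c, ν i ≤ (k : ℕ∞) := by
      intro ν hν
      have hlt := h' ν hν
      have hne' : ν i ≠ ⊤ := ne_top_of_lt hlt
      obtain ⟨j, hj⟩ := WithTop.ne_top_iff_exists.mp hne'
      rw [← hj] at hlt ⊢
      have hjk : j < k + 1 := Nat.cast_lt.mp hlt
      exact Nat.cast_le.mpr (Nat.lt_succ_iff.mp hjk)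
    have : (⨆ ν ∈ c, ν i) ≤ (k : ℕ∞) := by
      exact iSup₂_le hb
    have := h.trans this
    exact absurd this (by exact_mod_cast Nat.not_succ_le_self k)

lemma exists_maxgood {ν₀ : Fin n → ℕ∞} (h0 : Good K n I ν₀) :
    ∃ ν, MaxGood K n I ν ∧ ν₀ ≤ ν := by
  have hz : ∀ c ⊆ {ν | Good K n I ν}, IsChain (· ≤ ·) c → ∀ y ∈ c,
      ∃ ub ∈ {ν | Good K n I ν}, ∀ z ∈ c, z ≤ ub := by
    intro c hcs hchain y hy
    refine ⟨fun i => ⨆ ν ∈ c, ν i, ⟨?_, ?_⟩, ?_⟩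
    · intro i j hij
      refine iSup₂_le fun ν hν => ?_
      exact le_trans ((hcs hν).1 hij) (le_iSup₂ (f := fun ν (_ : ν ∈ c) => ν i) ν hν)
    · intro a ha
      have hsel : ∀ s : Finset (Fin n), ∃ ν ∈ c, ∀ i ∈ s, (a i : ℕ∞) ≤ ν i := by
        intro s
        induction s using Finset.induction with
        | empty => exact ⟨y, hy, by simp⟩
        | @insert x s' hx ih =>
          obtain ⟨ν₁, hν₁, h1⟩ := le_biSup_enat n ⟨y, hy⟩ x (a x) (ha x)
          obtain ⟨ν₂, hν₂, h2⟩ := ih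
          rcases hchain.total hν₁ hν₂ with hle | hle
          · exact ⟨ν₂, hν₂, fun i hi => by
              rcases Finset.mem_insert.mp hi with rfl | hi
              · exact h1.trans (hle i)
              · exact h2 i hi⟩
          · exact ⟨ν₁, hν₁, fun i hi => by
              rcases Finset.mem_insert.mp hi with rfl | hi
              · exact h1
              · exact (h2 i hi).trans (hle i)⟩
      obtain ⟨ν, hν, hall⟩ := hsel Finset.univ
      exact (hcs hν).2 a (fun i => hall i (Finset.mem_univ i))
    · intro z hz i
      exact le_iSup₂ (f := fun ν (_ : ν ∈ c) => ν i) z hz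
  obtain ⟨m, hm1, hm2⟩ := zorn_le_nonempty₀ {ν | Good K n I ν} hz ν₀ h0
  exact ⟨m, ⟨hm2.1, fun ρ hρ hle => le_antisymm (hm2.2 hρ hle) hle⟩, hm1⟩

lemma finite_maxgood : {ν | MaxGood K n I ν}.Finite := by
  have hanti : IsAntichain (· ≤ ·) {ν | MaxGood K n I ν} := by
    intro a ha b hb hab hle
    exact hab ((ha.2 b hb.1 hle).symm)
  exact hanti.finite_of_partiallyWellOrderedOn
    (Set.isPWO_of_wellQuasiOrderedLE _)

lemma qgen_anti {ν ρ : Fin n → ℕ∞} (h : ν ≤ ρ) : Qgen K n ρ ≤ Qgen K n ν := by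
  intro p hp
  rw [mem_qgen_iff_support] at hp ⊢
  intro d hd
  rw [mon_mem_qgen]
  intro σ
  obtain ⟨i, hi⟩ := (mon_mem_qgen K n ρ ⇑d).mp (hp d hd) σ
  exact ⟨i, lt_of_le_of_lt (h i) hi⟩

lemma good_zero (hproper : I ≠ ⊤) : Good K n I (fun _ => (0 : ℕ∞)) := by
  refine ⟨fun i j _ => le_rfl, fun a ha haI => ?_⟩
  have ha0 : a = fun _ => 0 := by
    funext i
    have := ha i
    exact_mod_cast nonpos_iff_eq_zero.mp this
  rw [ha0] at haI
  have h1 : mon K n (fun _ => 0) = 1 := by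
    unfold mon
    have : Finsupp.equivFunOnFinite.symm (fun _ : Fin n => (0:ℕ)) = 0 := by ext i; simp
    rw [this]
    simp [MvPolynomial.monomial_zero']
  rw [h1] at haI
  exact hproper ((Ideal.eq_top_iff_one I).mpr haI)

theorem statement_5' (I : Ideal (MvPolynomial (Fin n) K))
    (hmon : ∃ S : Set (Fin n → ℕ), I = Ideal.span (mon K n '' S))
    (hsym : ∀ σ : Equiv.Perm (Fin n), Ideal.map (MvPolynomial.rename σ).toRingHom I = I)
    (hproper : I ≠ ⊤) :
    ∃ Λ : Finset (Fin n → ℕ∞),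
      (Λ.Nonempty ∧ ((∀ μ ∈ Λ, Antitone μ) ∧ (I = ⨅ μ ∈ Λ, Qgen K n μ) ∧
        ∀ μ ∈ Λ, I ≠ ⨅ ρ ∈ Λ, ⨅ _ : ρ ≠ μ, Qgen K n ρ)) ∧
      ∀ Λ' : Finset (Fin n → ℕ∞), Λ'.Nonempty →
        ((∀ μ ∈ Λ', Antitone μ) ∧ (I = ⨅ μ ∈ Λ', Qgen K n μ) ∧
          ∀ μ ∈ Λ', I ≠ ⨅ ρ ∈ Λ', ⨅ _ : ρ ≠ μ, Qgen K n ρ) → Λ' = Λ := by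
  classical
  set Λ : Finset (Fin n → ℕ∞) := (finite_maxgood K n I).toFinset with hΛdef
  have hmemΛ : ∀ ν, ν ∈ Λ ↔ MaxGood K n I ν := fun ν => (finite_maxgood K n I).mem_toFinset
  -- core: a monomial lies in I iff it lies in every Qgen ν for ν maximal good
  have hcore : ∀ a : Fin n → ℕ, (mon K n a ∈ I ↔ ∀ ν ∈ Λ, mon K n a ∈ Qgen K n ν) := by
    intro a
    constructor
    · intro haI ν hν
      by_contra hnot
      obtain ⟨σ, hσ⟩ := (mon_not_mem_qgen K n ν a).mp hnot
      exact ((hmemΛ ν).mp hν).1.2 (a ∘ ⇑σ) hσ (I_perm K n I hsym σ haI)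
    · intro hall
      by_contra haI
      obtain ⟨σ₀, hσ₀⟩ := exists_perm_antitone n a
      have hnot₀ : mon K n (a ∘ ⇑σ₀) ∉ I := by
        intro hmem
        have := I_perm K n I hsym σ₀⁻¹ hmem
        have he : (a ∘ ⇑σ₀) ∘ ⇑σ₀⁻¹ = a := by
          funext i; simp
        rw [he] at this
        exact haI this
      have hgood₀ : Good K n I (fun i => ((a ∘ ⇑σ₀) i : ℕ∞)) := by
        refine ⟨fun i j hij => Nat.cast_le.mpr (hσ₀ hij), fun b hb hbI => ?_⟩
        exact hnot₀ (I_up K n I (fun i => Nat.cast_le.mp (hb i)) hbI)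
      obtain ⟨ν, hνmax, hνge⟩ := exists_maxgood K n I hgood₀
      have := (mon_mem_qgen K n ν a).mp (hall ν ((hmemΛ ν).mpr hνmax)) σ₀
      obtain ⟨i, hi⟩ := this
      exact absurd (le_trans (Nat.cast_le.mpr le_rfl : ((a ∘ ⇑σ₀) i : ℕ∞) ≤ _) (hνge i))
        (not_le.mpr hi)
  have heqI : I = ⨅ ν ∈ Λ, Qgen K n ν := by
    ext p
    rw [mem_I_iff_support K n I hmon p]
    simp only [Submodule.mem_iInf]
    constructor
    · intro h ν hν
      rw [mem_qgen_iff_support]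
      intro d hd
      exact (hcore ⇑d).mp (h d hd) ν hν
    · intro h d hd
      exact (hcore ⇑d).mpr fun ν hν => (mem_qgen_iff_support K n ν p).mp (h ν hν) d hd
  have hne0 : Λ.Nonempty := by
    obtain ⟨ν, hν, _⟩ := exists_maxgood K n I (good_zero K n I hproper)
    exact ⟨ν, (hmemΛ ν).mpr hν⟩
  have hirr : ∀ ν ∈ Λ, I ≠ ⨅ ρ ∈ Λ, ⨅ _ : ρ ≠ ν, Qgen K n ρ := by
    intro ν hν heq'
    obtain ⟨N, hNdef⟩ : ∃ N : ℕ, N = (Λ.sup fun ρ => Finset.univ.sup fun i => (ρ i).toNat) + 1 :=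
      ⟨_, rfl⟩
    have hmg := (hmemΛ ν).mp hν
    have htrI : mon K n (trunc n N ν) ∉ I := hmg.1.2 _ (trunc_below n N ν)
    have hmem : mon K n (trunc n N ν) ∈ ⨅ ρ ∈ Λ, ⨅ _ : ρ ≠ ν, Qgen K n ρ := by
      simp only [Submodule.mem_iInf]
      intro ρ hρ hρν
      rw [mon_mem_qgen]
      intro σ
      by_contra hnot
      push_neg at hnot
      have hbelow : Below n (trunc n N ν ∘ ⇑σ) ρ := fun i => hnot i
      have hb2 : Below n (trunc n N ν) ρ :=
        below_of_perm n _ ρ (trunc_antitone n N hmg.1.1) ((hmemΛ ρ).mp hρ).1.1 σ hbelow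
      have hle : ν ≤ ρ := by
        intro i
        rcases le_or_gt (ν i) ((N : ℕ∞)) with hc | hc
        · have hbi := hb2 i
          rwa [coe_trunc, min_eq_left hc] at hbi
        · have hNle : (N : ℕ∞) ≤ ρ i := by
            have hbi := hb2 i
            rwa [coe_trunc, min_eq_right hc.le] at hbi
          rcases eq_or_ne (ρ i) ⊤ with htop | htop
          · rw [htop]; exact le_top
          · exfalso
            have h1 : (ρ i).toNat ≤ N - 1 := by
              have h2 : (ρ i).toNat ≤ Finset.univ.sup (fun j => (ρ j).toNat) :=
                Finset.le_sup (f := fun j => (ρ j).toNat) (Finset.mem_univ i)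
              have h3 : Finset.univ.sup (fun j => (ρ j).toNat) ≤
                  Λ.sup fun ρ => Finset.univ.sup fun i => (ρ i).toNat :=
                Finset.le_sup (f := fun ρ : Fin n → ℕ∞ => Finset.univ.sup fun i => (ρ i).toNat) hρ
              rw [hNdef]
              simpa using h2.trans h3
            have h4 : ρ i ≤ ((N - 1 : ℕ) : ℕ∞) := by
              rw [← ENat.coe_toNat htop]
              exact Nat.cast_le.mpr h1
            have h5 : (N : ℕ∞) ≤ ((N - 1 : ℕ) : ℕ∞) := hNle.trans h4
            have h6 : N ≤ N - 1 := Nat.cast_le.mp h5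
            have h7 : 0 < N := by rw [hNdef]; exact Nat.succ_pos _
            exact absurd h6 (not_le.mpr (Nat.sub_lt h7 one_pos))
      exact hρν (hmg.2 ρ ((hmemΛ ρ).mp hρ).1 hle)
    rw [heq'] at htrI
    exact htrI hmem
  refine ⟨Λ, ⟨hne0, fun ν hν => ((hmemΛ ν).mp hν).1.1, heqI, hirr⟩, ?_⟩
  rintro Λ' hΛ'ne ⟨hant', heq', hirr'⟩
  have hmem' : ∀ a : Fin n → ℕ, (mon K n a ∈ I ↔ ∀ ρ ∈ Λ', mon K n a ∈ Qgen K n ρ) := by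
    intro a
    rw [heq']
    simp [Submodule.mem_iInf]
  have hgood' : ∀ ρ ∈ Λ', Good K n I ρ := by
    intro ρ hρ
    refine ⟨hant' ρ hρ, fun a ha haI => ?_⟩
    obtain ⟨i, hi⟩ := (mon_mem_qgen K n ρ a).mp ((hmem' a).mp haI ρ hρ) 1
    exact absurd (ha i) (not_le.mpr (by simpa using hi))
  have hdom : ∀ ν, Good K n I ν → ∃ ρ ∈ Λ', ν ≤ ρ := by
    intro ν hg
    have hpick : ∀ N : ℕ, ∃ ρ ∈ Λ', Below n (trunc n N ν) ρ := by
      intro N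
      have hnotI : mon K n (trunc n N ν) ∉ I := hg.2 _ (trunc_below n N ν)
      by_contra hno
      push_neg at hno
      apply hnotI
      rw [hmem']
      intro ρ hρ
      rw [mon_mem_qgen]
      intro σ
      by_contra h2
      push_neg at h2
      exact hno ρ hρ (below_of_perm n _ ρ (trunc_antitone n N hg.1) (hant' ρ hρ) σ
        (fun i => h2 i))
    choose g hg1 hg2 using hpick
    obtain ⟨ρ, hρinf⟩ := Finite.exists_infinite_fiber (fun N : ℕ => (⟨g N, hg1 N⟩ : {x // x ∈ Λ'}))
    have hT : (Set.Infinite ((fun N : ℕ => (⟨g N, hg1 N⟩ : {x // x ∈ Λ'})) ⁻¹' {ρ})) :=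
      Set.infinite_coe_iff.mp hρinf
    have hgval : ∀ N ∈ (fun N : ℕ => (⟨g N, hg1 N⟩ : {x // x ∈ Λ'})) ⁻¹' {ρ}, g N = ρ.1 := by
      intro N hN
      exact congrArg Subtype.val hN
    refine ⟨ρ.1, ρ.2, fun i => ?_⟩
    rcases eq_or_ne (ν i) ⊤ with htop | htop
    · rcases eq_or_ne (ρ.1 i) ⊤ with htop2 | htop2
      · rw [htop, htop2]
      · exfalso
        obtain ⟨N, hNT, hNgt⟩ := hT.exists_gt ((ρ.1 i).toNat)
        have hb := hg2 N i
        rw [hgval N hNT, coe_trunc, htop] at hb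
        have hNle : ((N : ℕ∞)) ≤ ρ.1 i := le_trans (le_min le_top le_rfl) hb
        rw [← ENat.coe_toNat htop2] at hNle
        exact absurd (Nat.cast_le.mp hNle) (not_le.mpr hNgt)
    · obtain ⟨m, hm⟩ := WithTop.ne_top_iff_exists.mp htop
      obtain ⟨N, hNT, hNgt⟩ := hT.exists_gt m
      have hb := hg2 N i
      rw [hgval N hNT, coe_trunc, ← hm] at hb
      have hmm : ((m : ℕ∞)) ≤ min ((m : ℕ∞)) ((N : ℕ∞)) :=
        le_min le_rfl (Nat.cast_le.mpr hNgt.le)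
      rw [← hm]
      exact hmm.trans hb
  have hΛsub : ∀ ρ ∈ Λ', ρ ∈ Λ := by
    intro ρ hρ
    obtain ⟨μ, hμmax, hμge⟩ := exists_maxgood K n I (hgood' ρ hρ)
    obtain ⟨ρ', hρ', hρ'ge⟩ := hdom μ hμmax.1
    rcases eq_or_ne ρ' ρ with rfl | hne'
    · have hμρ : μ = ρ' := le_antisymm hρ'ge hμge
      rw [hmemΛ]
      rwa [hμρ] at hμmax
    · exfalso
      apply hirr' ρ hρ
      apply le_antisymm
      · simp only [le_iInf_iff]
        intro τ hτ _
        rw [heq']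
        exact iInf_le_of_le τ (iInf_le_of_le hτ le_rfl)
      · intro p hp
        simp only [Submodule.mem_iInf] at hp
        have hpρ' : p ∈ Qgen K n ρ' := hp ρ' hρ' hne'
        have hpρ : p ∈ Qgen K n ρ := qgen_anti K n (hρ'ge.trans' hμge : ρ ≤ ρ') hpρ'
        rw [heq']
        simp only [Submodule.mem_iInf]
        intro τ hτ
        rcases eq_or_ne τ ρ with rfl | hτρ
        · exact hpρ
        · exact hp τ hτ hτρ
  have hΛsup : ∀ ν ∈ Λ, ν ∈ Λ' := by
    intro ν hν
    have hmax := (hmemΛ ν).mp hν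
    obtain ⟨ρ, hρ, hle⟩ := hdom ν hmax.1
    have hρν : ρ = ν := hmax.2 ρ (hgood' ρ hρ) hle
    rwa [hρν] at hρ
  exact Finset.Subset.antisymm (fun ρ hρ => hΛsub ρ hρ) (fun ν hν => hΛsup ν hν)

end St5

/-- Every nonzero, proper `S_n`-invariant monomial ideal `I ⊆ R` has a
presentation `I = Q_{μ^1} ∩ ⋯ ∩ Q_{μ^t}` with `μ^1, …, μ^t ∈ P_n^∞`, `t ≥ 1`, which is
irredundant (no `Q_{μ^k}` can be omitted), and the set `{μ^1, …, μ^t}` is unique. -/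
theorem statement_5 (K : Type) [Field K] (n : ℕ) (I : Ideal (MvPolynomial (Fin n) K))
    (hmon : IsMonomialIdeal K n I) (hsym : IsSymmetricIdeal K n I)
    (hne : I ≠ ⊥) (hproper : I ≠ ⊤) :
    ∃ Λ : Finset (Fin n → ℕ∞),
      (Λ.Nonempty ∧ IsDualPresentation K n I Λ) ∧
        ∀ Λ' : Finset (Fin n → ℕ∞), Λ'.Nonempty → IsDualPresentation K n I Λ' → Λ' = Λ := by
  exact statement_5' K n I hmon hsym hproper
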